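/- Let E be a subset of the closed unit disc that is symmetric with respect to complex conjugation (z ∈ E implies conj(z) ∈ E), and let p be continuous on the closed unit disc and holomorphic on the open unit disc with p(z) = 1 for all z ∈ E and |p(z)| < 1 for all z in the closed unit disc with z ∉ E. Then the function q(z) := p(z)·conj(p(conj z)) belongs to the real disc algebra A_ℝ(D), q(z) = 1 for all z ∈ E, and |q(z)| < 1 for all z in the closed unit disc with z ∉ E. -/

import Mathlib

open Complex Metric ComplexConjugate

/-- The real disc algebra `A_ℝ(D)`: functions continuous on the closed unit disc,
holomorphic on the open unit disc, satisfying `f z = conj (f (conj z))` on the closed disc. -/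
def IsRDisc (f : ℂ → ℂ) : Prop :=
  ContinuousOn f (closedBall (0 : ℂ) 1) ∧
  DifferentiableOn ℂ f (ball (0 : ℂ) 1) ∧
  ∀ z ∈ closedBall (0 : ℂ) 1, f z = conj (f (conj z))

/-- A unit of `A_ℝ(D)`: a member of the algebra with no zeros on the closed unit disc. -/
def IsRDiscUnit (f : ℂ → ℂ) : Prop :=
  IsRDisc f ∧ ∀ z ∈ closedBall (0 : ℂ) 1, f z ≠ 0

/-- The pair `(f, g)` is invertible in `A_ℝ(D)`: there are `α, β` in the algebra with
`α f + β g = 1` on the closed unit disc. -/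
def BezoutPair (f g : ℂ → ℂ) : Prop :=
  ∃ α β : ℂ → ℂ, IsRDisc α ∧ IsRDisc β ∧
    ∀ z ∈ closedBall (0 : ℂ) 1, α z * f z + β z * g z = 1

/-- The pairs `(f₁,g₁)` and `(f₂,g₂)` are sign-linked. -/
def SignLinked (f₁ g₁ f₂ g₂ : ℂ → ℂ) : Prop :=
  ∀ x y : ℝ, x ∈ Set.Icc (-1 : ℝ) 1 → y ∈ Set.Icc (-1 : ℝ) 1 →
    f₁ (x : ℂ) * g₂ (x : ℂ) - f₂ (x : ℂ) * g₁ (x : ℂ) = 0 →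
    f₁ (y : ℂ) * g₂ (y : ℂ) - f₂ (y : ℂ) * g₁ (y : ℂ) = 0 →
    ∀ lam mu : ℝ,
      f₂ (x : ℂ) = (lam : ℂ) * f₁ (x : ℂ) → g₂ (x : ℂ) = (lam : ℂ) * g₁ (x : ℂ) →
      f₂ (y : ℂ) = (mu : ℂ) * f₁ (y : ℂ) → g₂ (y : ℂ) = (mu : ℂ) * g₁ (y : ℂ) →
      0 < lam * mu

/-- `f` has constant sign on the real zeros of `g`: the (real) values `f x` over
`x ∈ [-1,1]` with `g x = 0` are either all positive or all negative. -/
def ConstSignOnRealZeros (f g : ℂ → ℂ) : Prop :=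
  (∀ x ∈ Set.Icc (-1 : ℝ) 1, g (x : ℂ) = 0 → 0 < (f (x : ℂ)).re) ∨
  (∀ x ∈ Set.Icc (-1 : ℝ) 1, g (x : ℂ) = 0 → (f (x : ℂ)).re < 0)


open Topology in
lemma conj_mem_ball' {z : ℂ} (h : z ∈ ball (0:ℂ) 1) : (conj z) ∈ ball (0:ℂ) 1 := by
  simpa [mem_ball, Complex.dist_eq] using h

open Topology in
lemma conj_conj_hasDerivAt {p : ℂ → ℂ} {d w : ℂ} (h : HasDerivAt p d w) :
    HasDerivAt (fun z => conj (p (conj z))) (conj d) (conj w) := by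
  rw [hasDerivAt_iff_tendsto_slope] at h ⊢
  have hmap : Filter.Tendsto (fun z : ℂ => conj z) (𝓝[≠] (conj w)) (𝓝[≠] w) := by
    rw [nhdsWithin, nhdsWithin]
    refine Filter.Tendsto.inf ?_ (Filter.tendsto_principal_principal.2 ?_)
    · simpa using (Complex.continuous_conj.tendsto (conj w))
    · intro x hx
      simp only [Set.mem_compl_iff, Set.mem_singleton_iff] at hx ⊢
      intro hc
      apply hx
      have := congrArg conj hc
      simpa using this
  have := (Complex.continuous_conj.tendsto d).comp (h.comp hmap)
  refine this.congr (fun z => ?_)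
  simp [slope_def_field, Function.comp, map_div₀, map_sub]

theorem symmetrized_peak_function (E : Set ℂ) (hE : E ⊆ closedBall (0 : ℂ) 1)
    (hsym : ∀ z ∈ E, conj z ∈ E)
    (p : ℂ → ℂ) (hpc : ContinuousOn p (closedBall (0 : ℂ) 1))
    (hpd : DifferentiableOn ℂ p (ball (0 : ℂ) 1))
    (hpeak : ∀ z ∈ E, p z = 1)
    (hlt : ∀ z ∈ closedBall (0 : ℂ) 1, z ∉ E → ‖p z‖ < 1) :
    IsRDisc (fun z => p z * conj (p (conj z))) ∧
    (∀ z ∈ E, p z * conj (p (conj z)) = 1) ∧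
    ∀ z ∈ closedBall (0 : ℂ) 1, z ∉ E → ‖p z * conj (p (conj z))‖ < 1 := by
  
  have hconjmem : ∀ z ∈ closedBall (0:ℂ) 1, (conj z) ∈ closedBall (0:ℂ) 1 := by
    intro z hz; simpa [mem_closedBall, Complex.dist_eq] using hz
  refine ⟨⟨?_, ?_, ?_⟩, ?_, ?_⟩
  · refine ContinuousOn.mul hpc ?_
    exact Complex.continuous_conj.comp_continuousOn
      (hpc.comp Complex.continuous_conj.continuousOn hconjmem)
  · intro z hz
    have h1 : DifferentiableAt ℂ p z := hpd.differentiableAt (isOpen_ball.mem_nhds hz)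
    have h2 : DifferentiableAt ℂ p (conj z) :=
      hpd.differentiableAt (isOpen_ball.mem_nhds (conj_mem_ball' hz))
    have h3 : HasDerivAt (fun w => conj (p (conj w))) (conj (deriv p (conj z))) (conj (conj z)) :=
      conj_conj_hasDerivAt h2.hasDerivAt
    rw [Complex.conj_conj] at h3
    exact (h1.mul h3.differentiableAt).differentiableWithinAt
  · intro z _
    simp [mul_comm]
  · intro z hz
    have h1 := hpeak z hz
    have h2 := hpeak _ (hsym z hz)
    simp [h1, h2]
  · intro z hz hzE
    have hc : conj z ∈ closedBall (0:ℂ) 1 := hconjmem z hz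
    have hle : ‖p (conj z)‖ ≤ 1 := by
      by_cases h : conj z ∈ E
      · simp [hpeak _ h]
      · exact (hlt _ hc h).le
    have h0 : ‖p z‖ < 1 := hlt z hz hzE
    calc ‖p z * conj (p (conj z))‖
        = ‖p z‖ * ‖p (conj z)‖ := by simp [map_mul]
      _ ≤ ‖p z‖ * 1 :=
          mul_le_mul_of_nonneg_left hle (norm_nonneg _)
      _ < 1 := by simpa using h0
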